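/- Let (G, X) be a self-similar group action such that G is finite and the action of G on X is transitive (for all x, y ∈ X there exists g ∈ G with g·x = y). If ρ_x : G → G is bijective for some letter x ∈ X, then ρ_u is bijective for every word u ∈ X*. -/

import Mathlib

universe u v w

/-- A self-similar group action `(G, X)`: a group `G`, a set `X`, an action map
`G × X* → X*` and a restriction map `G × X* → G` satisfying (SS1)–(SS8). -/
structure SelfSimilarAction (G : Type u) [Group G] (X : Type v) where
  act : G → FreeMonoid X → FreeMonoid X
  res : G → FreeMonoid X → G
  /-- (SS1) `1 · u = u` -/
  one_act : ∀ u : FreeMonoid X, act 1 u = u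
  /-- (SS2) `(gh) · u = g · (h · u)` -/
  mul_act : ∀ (g h : G) (u : FreeMonoid X), act (g * h) u = act g (act h u)
  /-- (SS3) `g · 1 = 1` -/
  act_one : ∀ g : G, act g 1 = 1
  /-- (SS4) `g · (uv) = (g · u)((g|_u) · v)` -/
  act_mul : ∀ (g : G) (u v : FreeMonoid X), act g (u * v) = act g u * act (res g u) v
  /-- (SS5) `g|_1 = g` -/
  res_one : ∀ g : G, res g 1 = g
  /-- (SS6) `g|_{uv} = (g|_u)|_v` -/
  res_mul : ∀ (g : G) (u v : FreeMonoid X), res g (u * v) = res (res g u) v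
  /-- (SS7) `1|_u = 1` -/
  one_res : ∀ u : FreeMonoid X, res 1 u = 1
  /-- (SS8) `(gh)|_u = (g|_{h·u})(h|_u)` -/
  mul_res : ∀ (g h : G) (u : FreeMonoid X), res (g * h) u = res g (act h u) * res h u

/-- if `G` is finite and acts transitively on `X`, and `ρ_x` is bijective for
some letter `x ∈ X`, then `ρ_u` is bijective for every word `u ∈ X*`. -/
theorem stmt14 (G : Type u) [Group G] [Finite G] (X : Type v) (A : SelfSimilarAction G X)
    (htrans : ∀ x y : X, ∃ g : G, A.act g (FreeMonoid.of x) = FreeMonoid.of y)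
    (x : X) (hx : Function.Bijective fun g : G => A.res g (FreeMonoid.of x)) :
    ∀ u : FreeMonoid X, Function.Bijective fun g : G => A.res g u := by
  have hletter : ∀ y : X, Function.Bijective fun g : G => A.res g (FreeMonoid.of y) := by
    intro y
    obtain ⟨g, hg⟩ := htrans x y
    have key : (fun h : G => A.res h (FreeMonoid.of y)) =
        (fun k : G => k * (A.res g (FreeMonoid.of x))⁻¹) ∘
          (fun h : G => A.res h (FreeMonoid.of x)) ∘ (fun h : G => h * g) := by
      funext h
      have := A.mul_res h g (FreeMonoid.of x)
      rw [hg] at this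
      simp [Function.comp, this, mul_assoc]
    rw [key]
    exact ((Equiv.mulRight (A.res g (FreeMonoid.of x))⁻¹).bijective.comp hx).comp
      (Equiv.mulRight g).bijective
  intro u
  induction u using FreeMonoid.recOn with
  | one =>
    have : (fun g : G => A.res g (1 : FreeMonoid X)) = id := by
      funext g; simpa using A.res_one g
    rw [this]; exact Function.bijective_id
  | of_mul a u ihu =>
    have : (fun g : G => A.res g (FreeMonoid.of a * u)) =
        (fun g : G => A.res g u) ∘ (fun g : G => A.res g (FreeMonoid.of a)) := by
      funext g
      simpa [Function.comp] using A.res_mul g (FreeMonoid.of a) u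
    rw [this]
    exact ihu.comp (hletter a)
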